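/- Suppose v_1, …, v_n ∈ ℝ^n are eigenvectors of M with M v_k = λ_k v_k, v_1 = 𝟙 (with λ_1 = 1), and v_k^T Π v_l = δ_{kl} for all k, l. For t ∈ ℝ define the node vectors x_i(t) ∈ ℝ^{n−1} whose k-th component (1 ≤ k ≤ n−1) is √(exp(−t(1−λ_{k+1}))) · π_i · v_{k+1,i}, where π_i = d_i/(2m). Then for every partition g = {g_1, …, g_c} of {1, …, n}, the Markov Stability r(t,g) := Σ_{s=1}^{c} Σ_{i ∈ g_s} Σ_{j ∈ g_s} B(t)_{ij} satisfies r(t,g) = Σ_{s=1}^{c} ‖Σ_{i ∈ g_s} x_i(t)‖², i.e., maximizing Markov Stability over partitions is a max-sum-length vector partitioning problem for the vectors x_i(t). -/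

import Mathlib

open Matrix

attribute [local instance] Matrix.linftyOpNormedRing Matrix.linftyOpNormedAlgebra

lemma exp_mulVec_eigen {N : ℕ} (C : Matrix (Fin N) (Fin N) ℝ) (w : Fin N → ℝ) (μ : ℝ)
    (h : C.mulVec w = μ • w) :
    (NormedSpace.exp C).mulVec w = Real.exp μ • w := by
  have hpow : ∀ k : ℕ, (C ^ k).mulVec w = μ ^ k • w := by
    intro k
    induction k with
    | zero => simp
    | succ k ih =>
      rw [pow_succ, ← Matrix.mulVec_mulVec, h, Matrix.mulVec_smul, ih, smul_smul,
        pow_succ, mul_comm]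
  let L : Matrix (Fin N) (Fin N) ℝ →ₗ[ℝ] (Fin N → ℝ) :=
    { toFun := fun X => X.mulVec w
      map_add' := fun X Y => Matrix.add_mulVec X Y w
      map_smul' := fun a X => Matrix.smul_mulVec a X w }
  let L' := LinearMap.toContinuousLinearMap L
  have hsum : Summable fun k : ℕ => (((Nat.factorial k) : ℝ)⁻¹) • C ^ k :=
    NormedSpace.expSeries_summable' C
  have hmain : (NormedSpace.exp C).mulVec w = ∑' k : ℕ, (((Nat.factorial k) : ℝ)⁻¹ * μ ^ k) • w := by
    have : L' (NormedSpace.exp C) = ∑' k : ℕ, L' ((((Nat.factorial k) : ℝ)⁻¹) • C ^ k) := by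
      rw [NormedSpace.exp_eq_tsum ℝ]
      exact (L'.map_tsum hsum)
    simpa [L', L, Matrix.mulVec_smul, hpow, smul_smul] using this
  have hs2 : Summable fun k : ℕ => ((Nat.factorial k : ℝ))⁻¹ * μ ^ k := by
    simpa [smul_eq_mul] using NormedSpace.expSeries_summable' (𝕂 := ℝ) μ
  rw [hmain, Summable.tsum_smul_const hs2]
  congr 1
  rw [Real.exp_eq_exp_ℝ, NormedSpace.exp_eq_tsum ℝ]
  simp [smul_eq_mul]


/-- With `Π`-orthonormal eigenvectors `v_1=𝟙, v_2, …, v_n` of `M`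
and node vectors `x_i(t) ∈ ℝ^{n−1}` with components
`√(exp(−t(1−λ_{k+1}))) π_i v_{k+1,i}`, the Markov Stability of any partition
equals the max-sum-length vector-partition objective:
`∑_s ∑_{i,j∈g_s} B(t)_{ij} = ∑_s ‖∑_{i∈g_s} x_i(t)‖²`.
(The graph has `n+1` vertices, so the node vectors live in `ℝ^n`.) -/
theorem stmt_8 (n : ℕ) (A : Matrix (Fin (n+1)) (Fin (n+1)) ℝ)
    (hAsymm : A.IsSymm) (hAnonneg : ∀ i j, 0 ≤ A i j)
    (d : Fin (n+1) → ℝ) (hd : ∀ i, d i = ∑ j, A i j) (hdpos : ∀ i, 0 < d i)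
    (m : ℝ) (hm : m = (∑ i, ∑ j, A i j) / 2)
    (M : Matrix (Fin (n+1)) (Fin (n+1)) ℝ) (hM : M = (Matrix.diagonal d)⁻¹ * A)
    (Pi : Matrix (Fin (n+1)) (Fin (n+1)) ℝ)
    (hPi : Pi = (2 * m)⁻¹ • Matrix.diagonal d)
    (P : ℝ → Matrix (Fin (n+1)) (Fin (n+1)) ℝ)
    (hP : ∀ t, P t = NormedSpace.exp
      ((-t) • ((1 : Matrix (Fin (n+1)) (Fin (n+1)) ℝ) - M)))
    (B : ℝ → Matrix (Fin (n+1)) (Fin (n+1)) ℝ)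
    (hB : ∀ t, B t = Pi * P t -
      Matrix.vecMulVec (fun i => d i / (2 * m)) (fun j => d j / (2 * m)))
    (v : Fin (n+1) → Fin (n+1) → ℝ) (lam : Fin (n+1) → ℝ)
    (hv : ∀ k, M.mulVec (v k) = lam k • v k)
    (hv1 : v 0 = fun _ => (1 : ℝ)) (hlam1 : lam 0 = 1)
    (horth : ∀ k l, (v k) ⬝ᵥ Pi.mulVec (v l) = if k = l then 1 else 0)
    (t : ℝ) (x : Fin (n+1) → EuclideanSpace ℝ (Fin n))
    (hx : ∀ i k, x i k =
      Real.sqrt (Real.exp (-t * (1 - lam k.succ))) * (d i / (2 * m)) * v k.succ i)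
    (c : ℕ) (g : Fin c → Finset (Fin (n+1)))
    (hdisj : ∀ s s' : Fin c, s ≠ s' → Disjoint (g s) (g s'))
    (hcover : Finset.univ.biUnion g = (Finset.univ : Finset (Fin (n+1)))) :
    ∑ s : Fin c, ∑ i ∈ g s, ∑ j ∈ g s, B t i j =
      ∑ s : Fin c, ‖∑ i ∈ g s, x i‖ ^ 2 := by
  -- eigenvalues of P t
  have hPv : ∀ k, (P t).mulVec (v k) = Real.exp (-t * (1 - lam k)) • v k := by
    intro k
    rw [hP]
    apply exp_mulVec_eigen
    rw [Matrix.smul_mulVec, Matrix.sub_mulVec, Matrix.one_mulVec, hv k]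
    ext i
    simp [Pi.smul_apply, smul_eq_mul]
    ring
  -- the eigenvector matrix
  set V : Matrix (Fin (n+1)) (Fin (n+1)) ℝ := Matrix.of v with hV
  have h1 : V * (Pi * Vᵀ) = 1 := by
    ext k l
    have h := horth k l
    simpa [Matrix.mul_apply, Matrix.mulVec, dotProduct, Matrix.one_apply,
      Finset.mul_sum, mul_assoc, hV] using h
  have h2 : (Pi * Vᵀ) * V = 1 := mul_eq_one_comm.mp h1
  have hPiT : Piᵀ = Pi := by
    rw [hPi, Matrix.transpose_smul, Matrix.diagonal_transpose]
  have h3 : Vᵀ * (V * Pi) = 1 := by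
    have h4 := congrArg Matrix.transpose h2
    rwa [Matrix.transpose_mul, Matrix.transpose_mul, Matrix.transpose_transpose,
      Matrix.transpose_one, hPiT] at h4
  -- entrywise formula for P t
  have hPentry : ∀ i j, P t i j =
      ∑ k, Real.exp (-t * (1 - lam k)) * v k i * (v k j * ((2 * m)⁻¹ * d j)) := by
    intro i j
    have hfac : P t = (P t * Vᵀ) * (V * Pi) := by
      rw [Matrix.mul_assoc, h3, Matrix.mul_one]
    have hPVt : ∀ k, (P t * Vᵀ) i k = Real.exp (-t * (1 - lam k)) * v k i := by
      intro k
      have := congrFun (hPv k) i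
      simpa [Matrix.mul_apply, Matrix.mulVec, dotProduct, Matrix.transpose_apply,
        smul_eq_mul, hV] using this
    have hVPi : ∀ k, (V * Pi) k j = v k j * ((2 * m)⁻¹ * d j) := by
      intro k
      simp [hPi, Matrix.mul_apply, Matrix.diagonal_apply, Finset.mul_sum, hV,
        mul_comm, mul_assoc, mul_left_comm]
    conv_lhs => rw [hfac]
    rw [Matrix.mul_apply]
    exact Finset.sum_congr rfl fun k _ => by rw [hPVt k, hVPi k]
  -- entrywise formula for B t
  have hBentry : ∀ i j, B t i j = ∑ k : Fin n, x i k * x j k := by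
    intro i j
    have hPiP : (Pi * P t) i j = (2 * m)⁻¹ * (d i * P t i j) := by
      simp only [hPi, Matrix.smul_mul, Matrix.smul_apply, smul_eq_mul,
        Matrix.diagonal_mul, Matrix.mul_apply]
      rw [Finset.sum_eq_single i]
      · rw [Matrix.diagonal_apply_eq]; ring
      · intro b _ hb
        rw [Matrix.diagonal_apply_ne' d hb]; ring
      · intro h; exact absurd (Finset.mem_univ i) h
    set T : Fin (n+1) → ℝ := fun k =>
      Real.exp (-t * (1 - lam k)) * v k i * (v k j * ((2 * m)⁻¹ * d j)) with hT
    have key : ∀ k : Fin n, x i k * x j k = (2 * m)⁻¹ * (d i * T k.succ) := by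
      intro k
      have hs : Real.sqrt (Real.exp (-t * (1 - lam k.succ))) *
          Real.sqrt (Real.exp (-t * (1 - lam k.succ))) =
          Real.exp (-t * (1 - lam k.succ)) :=
        Real.mul_self_sqrt (Real.exp_nonneg _)
      calc x i k * x j k
          = (Real.sqrt (Real.exp (-t * (1 - lam k.succ))) *
              Real.sqrt (Real.exp (-t * (1 - lam k.succ)))) *
            ((d i / (2 * m)) * v k.succ i * ((d j / (2 * m)) * v k.succ j)) := by
            rw [hx i k, hx j k]; ring
        _ = (2 * m)⁻¹ * (d i * T k.succ) := by rw [hs, hT]; ring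
    have k0 : (2 * m)⁻¹ * (d i * T 0) = d i / (2 * m) * (d j / (2 * m)) := by
      simp only [hT, hlam1, hv1]
      norm_num
      ring
    rw [hB, Matrix.sub_apply, hPiP, hPentry, Matrix.vecMulVec_apply, ← hT]
    rw [Finset.mul_sum, Finset.mul_sum, Fin.sum_univ_succ, k0,
      add_sub_cancel_left]
    exact (Finset.sum_congr rfl fun k _ => (key k).symm)
  -- norm identity
  have hnorm : ∀ s : Fin c, ‖∑ i ∈ g s, x i‖ ^ 2 =
      ∑ i ∈ g s, ∑ j ∈ g s, ∑ k : Fin n, x i k * x j k := by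
    intro s
    rw [← real_inner_self_eq_norm_sq, sum_inner]
    refine Finset.sum_congr rfl fun i _ => ?_
    rw [inner_sum]
    refine Finset.sum_congr rfl fun j _ => ?_
    simp [PiLp.inner_apply, RCLike.inner_apply, mul_comm]
  refine Finset.sum_congr rfl fun s _ => ?_
  rw [hnorm s]
  exact Finset.sum_congr rfl fun i _ => Finset.sum_congr rfl fun j _ =>
    (hBentry i j)
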